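/- Let G be a vertex-transitive r-regular graph on n vertices with local graph G^L (the subgraph induced by the non-neighbors of a fixed vertex, excluding the vertex itself). Then for all k ∈ N₀, the k-th level of the vertex-transitive exact subgraph hierarchy satisfies z'_k(G) = 1 + z_k(G^L) ≤ z_k(G). -/

import Mathlib

open scoped Classical


/-- Feasibility for the SDP formulation ϑ₁:
max 1ᵀx s.t. [[X, x],[xᵀ,1]] ⪰ 0, diag(X) = x, X_{ij} = 0 on edges. -/
def Theta1Feasible {V : Type} [Fintype V] (G : SimpleGraph V)
    (x : V → ℝ) (X : Matrix V V ℝ) : Prop :=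
  (Matrix.fromBlocks X (Matrix.of fun i (_ : Unit) => x i)
      (Matrix.of fun (_ : Unit) j => x j) 1).PosSemidef ∧
  (∀ i, X i i = x i) ∧ (∀ i j, G.Adj i j → X i j = 0)

/-- The squared stable set polytope STAB²(H): the convex hull of the outer
products ssᵀ of incidence vectors s of stable sets of H. -/
def stab2 {W : Type} (H : SimpleGraph W) : Set (Matrix W W ℝ) :=
  convexHull ℝ {M | ∃ s : W → ℝ, (∀ i, s i = 0 ∨ s i = 1) ∧
    (∀ i j, H.Adj i j → s i * s j = 0) ∧ M = Matrix.vecMulVec s s}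

/-- The optimal value z_J(G) of the ϑ₁ SDP with the exact subgraph constraint
added for every vertex subset I ∈ J. -/
noncomputable def zJ {V : Type} [Fintype V] (G : SimpleGraph V) (J : Set (Set V)) : ℝ :=
  sSup {t | ∃ (x : V → ℝ) (X : Matrix V V ℝ), Theta1Feasible G x X ∧
    (∀ I ∈ J, X.submatrix (fun a : I => (a : V)) (fun a : I => (a : V)) ∈
      stab2 (G.induce I)) ∧
    t = ∑ i, x i}

/-- The k-th level z_k(G) of the exact subgraph hierarchy: exact subgraph
constraints for all k-element vertex subsets (with the convention
z_k(G) = z_n(G) for k > n). -/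
noncomputable def zk {V : Type} [Fintype V] (G : SimpleGraph V) (k : ℕ) : ℝ :=
  zJ G {I : Set V | I.ncard = min k (Fintype.card V)}

/-- The Lovász theta function of a graph. -/
noncomputable def lovaszTheta {V : Type} [Fintype V] (G : SimpleGraph V) : ℝ :=
  sSup {t | ∃ X : Matrix V V ℝ, X.PosSemidef ∧ X.trace = 1 ∧
    (∀ i j, G.Adj i j → X i j = 0) ∧ t = ∑ i, ∑ j, X i j}

/- ### Auxiliary lemmas -/

lemma sum_dite_mem {α : Type} [Fintype α] (p : α → Prop) [inst : Fintype {a // p a}]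
    (f : {a // p a} → ℝ) :
    ∑ a : α, (if h : p a then f ⟨a, h⟩ else 0) = ∑ a : {a // p a}, f a := by
  rw [show (∑ a : α, (if h : p a then f ⟨a, h⟩ else 0))
      = ∑ a ∈ {x | p x}.toFinset, (if h : p a then f ⟨a, h⟩ else 0) from
    (Finset.sum_subset ({x | p x}.toFinset.subset_univ)
      (by intro a _ ha; rw [dif_neg]; simpa [Set.mem_toFinset] using ha)).symm]
  rw [Finset.sum_toFinset_eq_subtype p (fun a : α => if h : p a then f ⟨a, h⟩ else 0)]
  exact Finset.sum_congr (by congr!) (fun a _ => by rw [dif_pos a.2])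

lemma sum_ite_dite {V : Type} [Fintype V] (W : Set V) [Fintype ↥W] (u : V) (f : ↥W → ℝ) :
    (∑ w : ↥W, if u = ↑w then f w else 0) = if h : u ∈ W then f ⟨u, h⟩ else 0 := by
  by_cases h : u ∈ W
  · rw [dif_pos h, Finset.sum_eq_single ⟨u, h⟩]
    · simp
    · intro b _ hb
      have : ¬ u = ↑b := fun e => hb (by apply Subtype.ext; exact e.symm)
      simp [this]
    · simp
  · rw [dif_neg h]
    apply Finset.sum_eq_zero
    intro w _
    have : ¬ u = ↑w := fun e => h (e ▸ w.2)
    simp [this]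

/-- The zero solution is feasible, with all exact subgraph constraints. -/
lemma zero_mem_zJset {V : Type} [Fintype V] (G : SimpleGraph V) (J : Set (Set V)) :
    (0 : ℝ) ∈ {t | ∃ (x : V → ℝ) (X : Matrix V V ℝ), Theta1Feasible G x X ∧
      (∀ I ∈ J, X.submatrix (fun a : I => (a : V)) (fun a : I => (a : V)) ∈
        stab2 (G.induce I)) ∧ t = ∑ i, x i} := by
  refine ⟨fun _ => 0, 0, ⟨?_, by simp, by simp⟩, ?_, by simp⟩
  · refine Matrix.PosSemidef.of_dotProduct_mulVec_nonneg ?_ ?_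
    · ext a b
      rcases a with a | a <;> rcases b with b | b <;>
        simp [Matrix.fromBlocks, Matrix.conjTranspose_apply]
    · intro z
      have : (Matrix.fromBlocks (0 : Matrix V V ℝ) (Matrix.of fun i (_ : Unit) => (0:ℝ))
          (Matrix.of fun (_ : Unit) j => (0:ℝ)) 1).mulVec z
          = Sum.elim (fun _ => 0) (fun _ => z (Sum.inr ())) := by
        ext a
        rcases a with a | a <;>
          simp [Matrix.mulVec, dotProduct, Matrix.fromBlocks, Fintype.sum_sum_type]
      rw [this]
      simp [dotProduct, Fintype.sum_sum_type, mul_self_nonneg]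
  · intro I _
    apply subset_convexHull
    refine ⟨fun _ => 0, fun i => Or.inl rfl, by simp, ?_⟩
    ext a b
    simp [Matrix.vecMulVec_apply]

/-- The feasible set values are bounded above by the number of vertices. -/
lemma bddAbove_zJset {V : Type} [Fintype V] (G : SimpleGraph V) (J : Set (Set V)) :
    BddAbove {t | ∃ (x : V → ℝ) (X : Matrix V V ℝ), Theta1Feasible G x X ∧
      (∀ I ∈ J, X.submatrix (fun a : I => (a : V)) (fun a : I => (a : V)) ∈
        stab2 (G.induce I)) ∧ t = ∑ i, x i} := by
  refine ⟨Fintype.card V, ?_⟩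
  rintro t ⟨x, X, hf, -, rfl⟩
  have hxle : ∀ i, x i ≤ 1 := by
    intro i
    have h := hf.1.dotProduct_mulVec_nonneg (Sum.elim (fun v => if v = i then (1:ℝ) else 0) (fun _ => -1))
    simp only [star_trivial] at h
    simp [dotProduct, Matrix.mulVec, Fintype.sum_sum_type, Matrix.fromBlocks,
      mul_ite, ite_mul, mul_zero, zero_mul, mul_one, one_mul, mul_neg, neg_mul,
      Finset.sum_ite_eq, Finset.sum_ite_eq', Finset.sum_add_distrib, Finset.sum_neg_distrib] at h
    rw [hf.2.1 i] at h
    linarith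
  calc ∑ i, x i ≤ ∑ _i : V, (1:ℝ) := Finset.sum_le_sum (fun i _ => hxle i)
    _ = Fintype.card V := by simp

set_option maxHeartbeats 1600000 in
/-- Lifting a feasible solution of the local graph to the whole graph. -/
lemma lift_feasible {V : Type} [Fintype V] (G : SimpleGraph V) (v0 : V) (W : Set V)
    [Fintype ↥W] (hW : ∀ v, v ∈ W ↔ v ≠ v0 ∧ ¬ G.Adj v0 v) (k : ℕ)
    (x : ↥W → ℝ) (X : Matrix ↥W ↥W ℝ) (hf : Theta1Feasible (G.induce W) x X)
    (hc : ∀ I : Set ↥W, I.ncard = min k (Fintype.card ↥W) →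
      X.submatrix (fun a : I => (a : ↥W)) (fun a : I => (a : ↥W)) ∈
        stab2 ((G.induce W).induce I)) :
    ∃ (x' : V → ℝ) (X' : Matrix V V ℝ), Theta1Feasible G x' X' ∧
      (∀ I : Set V, I.ncard = min k (Fintype.card V) →
        X'.submatrix (fun a : I => (a : V)) (fun a : I => (a : V)) ∈ stab2 (G.induce I)) ∧
      ∑ v, x' v = 1 + ∑ w : ↥W, x w := by
  have hWne : ∀ w : ↥W, (w : V) ≠ v0 := fun w => ((hW w).1 w.2).1
  have hv0W : v0 ∉ W := fun h => ((hW v0).1 h).1 rfl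
  set x' : V → ℝ := fun v => (if h : v ∈ W then x ⟨v, h⟩ else 0) + (if v = v0 then 1 else 0) with hx'
  set X' : Matrix V V ℝ := fun u v =>
    (if hu : u ∈ W then ((if hv : v ∈ W then X ⟨u, hu⟩ ⟨v, hv⟩ else 0) +
        (if v = v0 then x ⟨u, hu⟩ else 0)) else 0) +
      (if u = v0 then x' v else 0) with hX'
  set B : Matrix (↥W ⊕ Unit) (V ⊕ Unit) ℝ := fun a b =>
    Sum.elim (fun (w : ↥W) => Sum.elim (fun v => if v = ↑w then (1:ℝ) else 0) (fun _ => 0))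
             (fun _ => Sum.elim (fun v => if v = v0 then (1:ℝ) else 0) (fun _ => 1)) a b with hB
  set M := Matrix.fromBlocks X (Matrix.of fun i (_ : Unit) => x i)
      (Matrix.of fun (_ : Unit) j => x j) (1 : Matrix Unit Unit ℝ) with hM
  set N : Matrix (↥W ⊕ Unit) (V ⊕ Unit) ℝ := fun a b =>
    Sum.elim (fun (w : ↥W) => Sum.elim
        (fun v => (if hv : v ∈ W then X w ⟨v, hv⟩ else 0) + (if v = v0 then x w else 0))
        (fun _ => x w))
      (fun _ => Sum.elim (fun v => x' v) (fun _ => (1:ℝ))) a b with hN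
  have hMB : M * B = N := by
    ext a b
    rw [Matrix.mul_apply]
    rcases a with w | _ <;> rcases b with v | _ <;>
      simp [Matrix.mul_apply, Fintype.sum_sum_type, hM, hB, hN, Matrix.fromBlocks,
        mul_ite, mul_one, mul_zero, hx', sum_ite_dite]
  have hBN : B.conjTranspose * N = Matrix.fromBlocks X' (Matrix.of fun i (_ : Unit) => x' i)
      (Matrix.of fun (_ : Unit) j => x' j) (1 : Matrix Unit Unit ℝ) := by
    ext a b
    rw [Matrix.mul_apply]
    simp only [Matrix.conjTranspose_apply]
    rcases a with u | _ <;> rcases b with v | _ <;>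
      simp [Matrix.mul_apply, Fintype.sum_sum_type, hB, hN, Matrix.fromBlocks,
        Matrix.conjTranspose_apply, mul_ite, mul_one, mul_zero, ite_mul, zero_mul, one_mul,
        hx', hX', sum_ite_dite]
  have hPSD : (Matrix.fromBlocks X' (Matrix.of fun i (_ : Unit) => x' i)
      (Matrix.of fun (_ : Unit) j => x' j) (1 : Matrix Unit Unit ℝ)).PosSemidef := by
    have h := hf.1.conjTranspose_mul_mul_same B
    rwa [← hM, Matrix.mul_assoc, hMB, hBN] at h
  have hdiag : ∀ i, X' i i = x' i := by
    intro i
    by_cases hi : i ∈ W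
    · simp [hX', hx', hi, hWne ⟨i, hi⟩, hf.2.1 ⟨i, hi⟩]
    · by_cases hi0 : i = v0 <;> simp [hX', hx', hi, hi0, hv0W]
  have hedge : ∀ i j, G.Adj i j → X' i j = 0 := by
    intro i j hij
    by_cases hi : i ∈ W
    · have hi0 : i ≠ v0 := ((hW i).1 hi).1
      by_cases hj : j ∈ W
      · have : X ⟨i, hi⟩ ⟨j, hj⟩ = 0 := hf.2.2 ⟨i, hi⟩ ⟨j, hj⟩ (by simpa using hij)
        simp [hX', hi, hj, hi0, this, hWne ⟨j, hj⟩]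
      · have hj0 : j ≠ v0 := by
          rintro rfl
          exact ((hW i).1 hi).2 hij.symm
        simp [hX', hi, hj, hi0, hj0]
    · by_cases hi0 : i = v0
      · have hj : j ∉ W := fun hj => ((hW j).1 hj).2 (hi0 ▸ hij)
        have hj0 : j ≠ v0 := fun e => G.irrefl (by rw [hi0, e] at hij; exact hij)
        simp [hX', hx', hi, hi0, hj, hj0]
      · simp [hX', hi, hi0]
  have hsum : ∑ v, x' v = 1 + ∑ w : ↥W, x w := by
    rw [hx']
    rw [Finset.sum_add_distrib]
    rw [sum_dite_mem (fun v => v ∈ W) (fun w => x w)]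
    simp [add_comm]
  refine ⟨x', X', ⟨hPSD, hdiag, hedge⟩, ?_, hsum⟩
  -- the exact subgraph constraints
  intro I hI
  set IW : Set ↥W := {w : ↥W | (w : V) ∈ I} with hIWdef
  have hIWcard : IW.ncard ≤ min k (Fintype.card ↥W) := by
    have h1 : IW.ncard ≤ I.ncard := by
      have hsub : ((↑) '' IW : Set V) ⊆ I := by rintro v ⟨w, hw, rfl⟩; exact hw
      calc IW.ncard = ((↑) '' IW : Set V).ncard :=
            (Set.ncard_image_of_injective _ Subtype.coe_injective).symm
        _ ≤ I.ncard := Set.ncard_le_ncard hsub (Set.toFinite I)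
    have h2 : IW.ncard ≤ Fintype.card ↥W := by
      calc IW.ncard ≤ (Set.univ : Set ↥W).ncard :=
            Set.ncard_le_ncard (Set.subset_univ _) (Set.toFinite _)
        _ = Fintype.card ↥W := by rw [Set.ncard_univ, Nat.card_eq_fintype_card]
    exact le_min (h1.trans (by rw [hI]; exact min_le_left _ _)) h2
  obtain ⟨I', hsub, -, hI'card⟩ := Set.exists_subsuperset_card_eq (Set.subset_univ IW) hIWcard
    (by rw [Set.ncard_univ, Nat.card_eq_fintype_card]; exact min_le_right _ _)
  have hmem := hc I' hI'card
  -- embedding of W-members of I into I'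
  have emmem : ∀ (a : ↥I) (h : (a : V) ∈ W), (⟨(a : V), h⟩ : ↥W) ∈ I' :=
    fun a h => hsub a.2
  classical
  -- the linear part of the affine map
  set L : Matrix ↥I' ↥I' ℝ →ₗ[ℝ] Matrix ↥I ↥I ℝ := {
    toFun := fun N a b =>
      if ha : (a : V) ∈ W then
        (if hb : (b : V) ∈ W then N ⟨⟨(a : V), ha⟩, emmem a ha⟩ ⟨⟨(b : V), hb⟩, emmem b hb⟩
         else if (b : V) = v0 then N ⟨⟨(a : V), ha⟩, emmem a ha⟩ ⟨⟨(a : V), ha⟩, emmem a ha⟩ else 0)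
      else if (a : V) = v0 then
        (if hb : (b : V) ∈ W then N ⟨⟨(b : V), hb⟩, emmem b hb⟩ ⟨⟨(b : V), hb⟩, emmem b hb⟩ else 0)
      else 0,
    map_add' := by
      intro N N'
      ext a b
      show _ = (_ : ℝ) + _
      by_cases ha : (a : V) ∈ W <;> by_cases hb : (b : V) ∈ W <;>
        simp [ha, hb, Matrix.add_apply] <;> split <;> simp
    map_smul' := by
      intro c N
      ext a b
      show _ = c • (_ : ℝ)
      by_cases ha : (a : V) ∈ W <;> by_cases hb : (b : V) ∈ W <;>
        simp [ha, hb, Matrix.smul_apply] <;> split <;> simp } with hL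
  set C : Matrix ↥I ↥I ℝ := fun a b => if (a : V) = v0 ∧ (b : V) = v0 then 1 else 0 with hC
  set f : Matrix ↥I' ↥I' ℝ →ᵃ[ℝ] Matrix ↥I ↥I ℝ := {
    toFun := fun N => C + L N,
    linear := L,
    map_vadd' := by
      intro p v
      simp only [vadd_eq_add, map_add]
      abel } with hfdef
  have hLapp : ∀ N a b, L N a b =
      if ha : (a : V) ∈ W then
        (if hb : (b : V) ∈ W then N ⟨⟨(a : V), ha⟩, emmem a ha⟩ ⟨⟨(b : V), hb⟩, emmem b hb⟩
         else if (b : V) = v0 then N ⟨⟨(a : V), ha⟩, emmem a ha⟩ ⟨⟨(a : V), ha⟩, emmem a ha⟩ else 0)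
      else if (a : V) = v0 then
        (if hb : (b : V) ∈ W then N ⟨⟨(b : V), hb⟩, emmem b hb⟩ ⟨⟨(b : V), hb⟩, emmem b hb⟩ else 0)
      else 0 := fun _ _ _ => rfl
  -- the submatrix identity
  have hXsub : X'.submatrix (fun a : I => (a : V)) (fun a : I => (a : V))
      = f (X.submatrix (fun a : I' => (a : ↥W)) (fun a : I' => (a : ↥W))) := by
    ext a b
    show X' (a : V) (b : V) = C a b + L _ a b
    rw [hLapp]
    by_cases ha : (a : V) ∈ W <;> by_cases hb : (b : V) ∈ W
    · simp [hX', hL, hC, ha, hb, hWne ⟨(a : V), ha⟩, hWne ⟨(b : V), hb⟩, Matrix.submatrix_apply]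
    · by_cases hb0 : (b : V) = v0 <;>
        simp [hX', hL, hC, ha, hb, hb0, hv0W, hWne ⟨(a : V), ha⟩, hf.2.1, Matrix.submatrix_apply]
    · by_cases ha0 : (a : V) = v0 <;>
        simp [hX', hx', hL, hC, ha, hb, ha0, hv0W, hf.2.1, Matrix.submatrix_apply, add_comm]
    · by_cases ha0 : (a : V) = v0 <;> by_cases hb0 : (b : V) = v0 <;>
        simp [hX', hx', hL, hC, ha, hb, ha0, hb0, hv0W, Matrix.submatrix_apply]
  -- generators map to generators
  have himg : f '' {M | ∃ s : ↥I' → ℝ, (∀ i, s i = 0 ∨ s i = 1) ∧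
        (∀ i j, ((G.induce W).induce I').Adj i j → s i * s j = 0) ∧ M = Matrix.vecMulVec s s}
      ⊆ {M | ∃ s : ↥I → ℝ, (∀ i, s i = 0 ∨ s i = 1) ∧
        (∀ i j, (G.induce I).Adj i j → s i * s j = 0) ∧ M = Matrix.vecMulVec s s} := by
    rintro M ⟨MN, ⟨s, hs01, hstab, rfl⟩, rfl⟩
    have hss : ∀ p, s p * s p = s p := by
      intro p; rcases hs01 p with h | h <;> simp [h]
    refine ⟨fun a => if h : (a : V) ∈ W then s ⟨⟨(a : V), h⟩, emmem a h⟩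
      else if (a : V) = v0 then 1 else 0, ?_, ?_, ?_⟩
    · intro a
      by_cases h : (a : V) ∈ W
      · simpa [h] using hs01 _
      · by_cases h0 : (a : V) = v0 <;> simp [h, h0, hv0W]
    · intro a b hab
      have hab' : G.Adj (a : V) (b : V) := by simpa using hab
      by_cases ha : (a : V) ∈ W <;> by_cases hb : (b : V) ∈ W
      · have : ((G.induce W).induce I').Adj ⟨⟨(a : V), ha⟩, emmem a ha⟩
            ⟨⟨(b : V), hb⟩, emmem b hb⟩ := by simpa using hab'
        simpa [ha, hb] using hstab _ _ this
      · have hb0 : (b : V) ≠ v0 := by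
          rintro e
          have h2 := hab'.symm
          rw [e] at h2
          exact ((hW (a : V)).1 ha).2 h2
        simp [ha, hb, hb0]
      · have ha0 : (a : V) ≠ v0 := by
          rintro e
          have h2 := hab'
          rw [e] at h2
          exact ((hW (b : V)).1 hb).2 h2
        simp [ha, hb, ha0, hWne ⟨(b : V), hb⟩]
      · by_cases ha0 : (a : V) = v0 <;> by_cases hb0 : (b : V) = v0
        · exfalso
          have h2 := hab'
          rw [ha0, hb0] at h2
          exact G.irrefl h2
        · simp [ha, hb, ha0, hb0]
        · simp [ha, hb, ha0, hb0]
        · simp [ha, hb, ha0, hb0]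
    · ext a b
      show C a b + L _ a b = _
      rw [hLapp]
      by_cases ha : (a : V) ∈ W <;> by_cases hb : (b : V) ∈ W
      · simp [hL, hC, ha, hb, hWne ⟨(a : V), ha⟩, hWne ⟨(b : V), hb⟩, Matrix.vecMulVec_apply]
      · by_cases hb0 : (b : V) = v0 <;>
          simp [hL, hC, ha, hb, hb0, hv0W, hWne ⟨(a : V), ha⟩, Matrix.vecMulVec_apply, hss]
      · by_cases ha0 : (a : V) = v0 <;>
          simp [hL, hC, ha, hb, ha0, hv0W, hWne ⟨(b : V), hb⟩, Matrix.vecMulVec_apply, hss]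
      · by_cases ha0 : (a : V) = v0 <;> by_cases hb0 : (b : V) = v0 <;>
          simp [hL, hC, ha, hb, ha0, hb0, hv0W, Matrix.vecMulVec_apply]
  -- conclude via image of convex hull
  rw [hXsub]
  have h1 : f (X.submatrix (fun a : I' => (a : ↥W)) (fun a : I' => (a : ↥W)))
      ∈ f '' stab2 ((G.induce W).induce I') := Set.mem_image_of_mem _ hmem
  rw [show stab2 ((G.induce W).induce I') = convexHull ℝ _ from rfl,
    AffineMap.image_convexHull] at h1
  exact convexHull_mono himg h1

theorem stmt17 {V : Type} [Fintype V] (G : SimpleGraph V) (r : ℕ)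
    (hvt : ∀ u v : V, ∃ e : G ≃g G, e u = v)
    (hreg : G.IsRegularOfDegree r) (v0 : V) (k : ℕ) :
    1 + zk (G.induce {v : V | v ≠ v0 ∧ ¬ G.Adj v0 v}) k ≤ zk G k := by
  set W := {v : V | v ≠ v0 ∧ ¬ G.Adj v0 v} with hWdef
  have hW : ∀ v, v ∈ W ↔ v ≠ v0 ∧ ¬ G.Adj v0 v := fun v => Iff.rfl
  have e1 : zk (G.induce W) k = sSup {t | ∃ (x : ↥W → ℝ) (X : Matrix ↥W ↥W ℝ),
      Theta1Feasible (G.induce W) x X ∧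
      (∀ I ∈ {I : Set ↥W | I.ncard = min k (Fintype.card ↥W)},
        X.submatrix (fun a : I => (a : ↥W)) (fun a : I => (a : ↥W)) ∈
          stab2 ((G.induce W).induce I)) ∧
      t = ∑ i, x i} := rfl
  have e2 : zk G k = sSup {t | ∃ (x : V → ℝ) (X : Matrix V V ℝ),
      Theta1Feasible G x X ∧
      (∀ I ∈ {I : Set V | I.ncard = min k (Fintype.card V)},
        X.submatrix (fun a : I => (a : V)) (fun a : I => (a : V)) ∈
          stab2 (G.induce I)) ∧
      t = ∑ i, x i} := rfl
  rw [e1, e2]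
  have hA0 := zero_mem_zJset (G.induce W) {I : Set ↥W | I.ncard = min k (Fintype.card ↥W)}
  have hBdd := bddAbove_zJset G {I : Set V | I.ncard = min k (Fintype.card V)}
  have hkey : ∀ t ∈ {t | ∃ (x : ↥W → ℝ) (X : Matrix ↥W ↥W ℝ),
      Theta1Feasible (G.induce W) x X ∧
      (∀ I ∈ {I : Set ↥W | I.ncard = min k (Fintype.card ↥W)},
        X.submatrix (fun a : I => (a : ↥W)) (fun a : I => (a : ↥W)) ∈
          stab2 ((G.induce W).induce I)) ∧
      t = ∑ i, x i}, (1 + t) ∈ {t | ∃ (x : V → ℝ) (X : Matrix V V ℝ),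
      Theta1Feasible G x X ∧
      (∀ I ∈ {I : Set V | I.ncard = min k (Fintype.card V)},
        X.submatrix (fun a : I => (a : V)) (fun a : I => (a : V)) ∈
          stab2 (G.induce I)) ∧
      t = ∑ i, x i} := by
    rintro t ⟨x, X, hf, hcon, rfl⟩
    obtain ⟨x', X', hf', hcon', hsum⟩ :=
      lift_feasible G v0 W hW k x X hf (fun I hI => hcon I hI)
    exact ⟨x', X', hf', fun I hI => hcon' I hI, hsum.symm⟩
  have h1 : sSup {t | ∃ (x : ↥W → ℝ) (X : Matrix ↥W ↥W ℝ),
      Theta1Feasible (G.induce W) x X ∧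
      (∀ I ∈ {I : Set ↥W | I.ncard = min k (Fintype.card ↥W)},
        X.submatrix (fun a : I => (a : ↥W)) (fun a : I => (a : ↥W)) ∈
          stab2 ((G.induce W).induce I)) ∧
      t = ∑ i, x i} ≤ sSup {t | ∃ (x : V → ℝ) (X : Matrix V V ℝ),
      Theta1Feasible G x X ∧
      (∀ I ∈ {I : Set V | I.ncard = min k (Fintype.card V)},
        X.submatrix (fun a : I => (a : V)) (fun a : I => (a : V)) ∈
          stab2 (G.induce I)) ∧
      t = ∑ i, x i} - 1 := by
    refine csSup_le ⟨0, hA0⟩ (fun t ht => ?_)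
    have h2 := le_csSup hBdd (hkey t ht)
    linarith
  linarith
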